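/- There exists a P-solvable MAPF instance such that the minimum flowtime over all solutions is strictly smaller than the flowtime of every solution that is consistent with some priority ordering; i.e., prioritized planning is suboptimal for the flowtime objective in general on the class of P-solvable MAPF instances, no matter which priority ordering is used. -/

import Mathlib

/-- Two (space-time) paths have a vertex collision: same vertex at the same time. -/
def VCol {V : Type} (π σ : ℕ → V) : Prop := ∃ t, π t = σ t

/-- Two (space-time) paths have an edge collision: they traverse the same edge in
opposite directions at the same time. -/
def ECol {V : Type} (π σ : ℕ → V) : Prop := ∃ t, π t = σ (t + 1) ∧ π (t + 1) = σ t

/-- Two paths collide if they have a vertex collision or an edge collision. -/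
def Collide {V : Type} (π σ : ℕ → V) : Prop := VCol π σ ∨ ECol π σ

/-- `π : ℕ → V` is a path from `s` to `t` in `G`: it starts at `s`, at each time step
it stays put or moves along an edge of `G`, and it is eventually always at `t`. -/
def IsPathFun {V : Type} (G : SimpleGraph V) (s t : V) (π : ℕ → V) : Prop :=
  π 0 = s ∧ (∀ n, π (n + 1) = π n ∨ G.Adj (π n) (π (n + 1))) ∧ ∃ T, ∀ n ≥ T, π n = t

/-- The arrival time of a path at a target vertex `tgt`: the least time `T` such that
the path is at `tgt` at all times `≥ T`. -/
noncomputable def arrivalTime {V : Type} (tgt : V) (π : ℕ → V) : ℕ :=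
  sInf {T | ∀ n ≥ T, π n = tgt}

/-- A MAPF instance: a connected undirected graph and `M` agents with pairwise distinct
start vertices and pairwise distinct target vertices. -/
structure MAPF where
  V : Type
  G : SimpleGraph V
  conn : G.Connected
  M : ℕ
  s : Fin M → V
  t : Fin M → V
  s_inj : Function.Injective s
  t_inj : Function.Injective t

/-- `π` is a path for agent `i` of the MAPF instance `P`. -/
def MAPF.IsPath (P : MAPF) (i : Fin P.M) (π : ℕ → P.V) : Prop :=
  IsPathFun P.G (P.s i) (P.t i) π

/-- The arrival time of agent `i`'s path `π`. -/
noncomputable def MAPF.arr (P : MAPF) (i : Fin P.M) (π : ℕ → P.V) : ℕ :=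
  arrivalTime (P.t i) π

/-- A solution: a path for each agent such that no two paths collide. -/
def MAPF.Solution (P : MAPF) (π : Fin P.M → ℕ → P.V) : Prop :=
  (∀ i, P.IsPath i (π i)) ∧ ∀ i j, i ≠ j → ¬ Collide (π i) (π j)

/-- A priority ordering: a strict partial order (irreflexive and transitive relation)
on the agents. -/
def IsPO {M : ℕ} (r : Fin M → Fin M → Prop) : Prop :=
  (∀ i, ¬ r i i) ∧ ∀ i j k, r i j → r j k → r i k

/-- A total priority ordering: a strict total order on the agents. -/
def IsTotalPO {M : ℕ} (r : Fin M → Fin M → Prop) : Prop :=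
  IsPO r ∧ ∀ i j : Fin M, i ≠ j → r i j ∨ r j i

/-- A plan `π` is consistent with a priority ordering `r`: for every agent `i`, the
arrival time of `π i` is the minimum arrival time over all paths for agent `i` that
have no collision with `π j` for every higher-priority agent `j` (`r j i`). -/
def MAPF.Consistent (P : MAPF) (π : Fin P.M → ℕ → P.V)
    (r : Fin P.M → Fin P.M → Prop) : Prop :=
  ∀ i, IsLeast {T | ∃ σ, P.IsPath i σ ∧ (∀ j, r j i → ¬ Collide σ (π j)) ∧ P.arr i σ = T}
    (P.arr i (π i))

/-- A MAPF instance is P-solvable if it admits a solution consistent with some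
priority ordering. -/
def MAPF.PSolvable (P : MAPF) : Prop :=
  ∃ π r, IsPO r ∧ P.Solution π ∧ P.Consistent π r

/-- The flowtime of a plan: the sum of the arrival times of all agents. -/
noncomputable def MAPF.flowtime (P : MAPF) (π : Fin P.M → ℕ → P.V) : ℕ :=
  ∑ i, P.arr i (π i)

/-- The makespan of a plan: the maximum of the arrival times of all agents. -/
noncomputable def MAPF.makespan (P : MAPF) (π : Fin P.M → ℕ → P.V) : ℕ :=
  Finset.univ.sup fun i => P.arr i (π i)

/-- A MAPF instance is well-formed if every agent has a (finite) walk from its start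
vertex to its target vertex that visits neither the start vertex nor the target vertex
of any other agent. -/
def MAPF.WellFormed (P : MAPF) : Prop :=
  ∀ i, ∃ w : P.G.Walk (P.s i) (P.t i),
    ∀ j, j ≠ i → P.s j ∉ w.support ∧ P.t j ∉ w.support

-- auxiliary development

def gAdj : Fin 6 → Fin 6 → Bool := fun a b =>
  decide ((a,b) ∈ [((3:Fin 6),(0:Fin 6)),(0,3),(4,0),(0,4),(5,0),(0,5),(2,1),(1,2),(4,1),(1,4),(3,2),(2,3)])

def myG : SimpleGraph (Fin 6) where
  Adj a b := gAdj a b = true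
  symm := by
    have h : ∀ a b : Fin 6, gAdj a b = true → gAdj b a = true := by decide
    exact ⟨fun a b => h a b⟩
  loopless := by
    have h : ∀ a : Fin 6, ¬ gAdj a a = true := by decide
    exact ⟨fun a => h a⟩

instance : DecidableRel myG.Adj := fun a b => inferInstanceAs (Decidable (gAdj a b = true))

lemma myG_conn : myG.Connected := by
  have reach : ∀ v : Fin 6, myG.Reachable v 0 := by
    intro v
    fin_cases v
    · rfl
    · exact (SimpleGraph.Adj.reachable (by decide : myG.Adj 1 4)).trans
        (SimpleGraph.Adj.reachable (by decide : myG.Adj 4 0))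
    · exact (SimpleGraph.Adj.reachable (by decide : myG.Adj 2 3)).trans
        (SimpleGraph.Adj.reachable (by decide : myG.Adj 3 0))
    · exact SimpleGraph.Adj.reachable (by decide)
    · exact SimpleGraph.Adj.reachable (by decide)
    · exact SimpleGraph.Adj.reachable (by decide)
  rw [SimpleGraph.connected_iff]
  exact ⟨fun u v => (reach u).trans (reach v).symm, ⟨0⟩⟩

def p0 : ℕ → Fin 6 := fun n => match n with |0=>3|1=>2|2=>1|3=>4|_=>0
def p1 : ℕ → Fin 6 := fun n => match n with |0=>5|1=>0|2=>3|_=>2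
def a0 : ℕ → Fin 6 := fun n => match n with |0=>3|1=>3|_=>0
def b1 : ℕ → Fin 6 := fun n => match n with |0=>5|1=>0|2=>4|3=>1|_=>2
def d0 : ℕ → Fin 6 := fun n => match n with |0=>3|_=>0

lemma p0_tail : ∀ n ≥ 4, p0 n = 0 := by
  intro n hn; rcases n with _|_|_|_|n <;> first | rfl | omega
lemma p1_tail : ∀ n ≥ 3, p1 n = 2 := by
  intro n hn; rcases n with _|_|_|n <;> first | rfl | omega
lemma a0_tail : ∀ n ≥ 2, a0 n = 0 := by
  intro n hn; rcases n with _|_|n <;> first | rfl | omega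
lemma b1_tail : ∀ n ≥ 4, b1 n = 2 := by
  intro n hn; rcases n with _|_|_|_|n <;> first | rfl | omega
lemma d0_tail : ∀ n ≥ 1, d0 n = 0 := by
  intro n hn; rcases n with _|n <;> first | rfl | omega

lemma isPath_p0 : IsPathFun myG 3 0 p0 := by
  refine ⟨rfl, ?_, 4, p0_tail⟩
  intro n
  rcases n with _|_|_|_|n
  · exact Or.inr (by decide)
  · exact Or.inr (by decide)
  · exact Or.inr (by decide)
  · exact Or.inr (by decide)
  · exact Or.inl rfl

lemma isPath_p1 : IsPathFun myG 5 2 p1 := by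
  refine ⟨rfl, ?_, 3, p1_tail⟩
  intro n
  rcases n with _|_|_|n
  · exact Or.inr (by decide)
  · exact Or.inr (by decide)
  · exact Or.inr (by decide)
  · exact Or.inl rfl

lemma isPath_a0 : IsPathFun myG 3 0 a0 := by
  refine ⟨rfl, ?_, 2, a0_tail⟩
  intro n
  rcases n with _|_|n
  · exact Or.inl rfl
  · exact Or.inr (by decide)
  · exact Or.inl rfl

lemma isPath_b1 : IsPathFun myG 5 2 b1 := by
  refine ⟨rfl, ?_, 4, b1_tail⟩
  intro n
  rcases n with _|_|_|_|n
  · exact Or.inr (by decide)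
  · exact Or.inr (by decide)
  · exact Or.inr (by decide)
  · exact Or.inr (by decide)
  · exact Or.inl rfl

lemma isPath_d0 : IsPathFun myG 3 0 d0 := by
  refine ⟨rfl, ?_, 1, d0_tail⟩
  intro n
  rcases n with _|n
  · exact Or.inr (by decide)
  · exact Or.inl rfl

lemma arr_spec {V : Type} (tgt : V) (π : ℕ → V) (h : ∃ T, ∀ n ≥ T, π n = tgt) :
    ∀ n ≥ arrivalTime tgt π, π n = tgt := Nat.sInf_mem h

lemma arr_le {V : Type} {tgt : V} {π : ℕ → V} {T : ℕ} (h : ∀ n ≥ T, π n = tgt) :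
    arrivalTime tgt π ≤ T := Nat.sInf_le h

lemma arr_ge {V : Type} {tgt : V} {π : ℕ → V} {T : ℕ} (hne : ∃ T', ∀ n ≥ T', π n = tgt)
    (h : ∀ m, (∀ n ≥ m, π n = tgt) → T ≤ m) : T ≤ arrivalTime tgt π :=
  le_csInf hne h

lemma arr_p0 : arrivalTime 0 p0 = 4 := by
  refine le_antisymm (arr_le p0_tail) (arr_ge ⟨4, p0_tail⟩ ?_)
  intro m hm
  by_contra hlt
  have h3 : p0 3 = 0 := hm 3 (by omega)
  exact absurd h3 (by decide)

lemma arr_p1 : arrivalTime 2 p1 = 3 := by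
  refine le_antisymm (arr_le p1_tail) (arr_ge ⟨3, p1_tail⟩ ?_)
  intro m hm
  by_contra hlt
  have h3 : p1 2 = 2 := hm 2 (by omega)
  exact absurd h3 (by decide)

lemma arr_a0 : arrivalTime 0 a0 = 2 := by
  refine le_antisymm (arr_le a0_tail) (arr_ge ⟨2, a0_tail⟩ ?_)
  intro m hm
  by_contra hlt
  have h3 : a0 1 = 0 := hm 1 (by omega)
  exact absurd h3 (by decide)

lemma arr_b1 : arrivalTime 2 b1 = 4 := by
  refine le_antisymm (arr_le b1_tail) (arr_ge ⟨4, b1_tail⟩ ?_)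
  intro m hm
  by_contra hlt
  have h3 : b1 3 = 2 := hm 3 (by omega)
  exact absurd h3 (by decide)

lemma arr_d0 : arrivalTime 0 d0 = 1 := by
  refine le_antisymm (arr_le d0_tail) (arr_ge ⟨1, d0_tail⟩ ?_)
  intro m hm
  by_contra hlt
  have h3 : d0 0 = 0 := hm 0 (by omega)
  exact absurd h3 (by decide)

/-- symmetry of collisions -/
lemma collide_symm {V : Type} {σ τ : ℕ → V} (h : Collide σ τ) : Collide τ σ := by
  rcases h with ⟨t, ht⟩ | ⟨t, h1, h2⟩
  · exact Or.inl ⟨t, ht.symm⟩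
  · exact Or.inr ⟨t, h2.symm, h1.symm⟩

lemma ncol_p0p1 : ¬ Collide p0 p1 := by
  rintro (⟨t, ht⟩ | ⟨t, h1, h2⟩)
  · rcases t with _|_|_|_|t
    · exact absurd ht (by decide)
    · exact absurd ht (by decide)
    · exact absurd ht (by decide)
    · exact absurd ht (by decide)
    · exact (by decide : (0:Fin 6) ≠ 2) ht
  · rcases t with _|_|_|_|t
    · exact absurd h1 (by decide)
    · exact absurd h1 (by decide)
    · exact absurd h1 (by decide)
    · exact absurd h1 (by decide)
    · exact (by decide : (0:Fin 6) ≠ 2) h1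

lemma ncol_a0b1 : ¬ Collide a0 b1 := by
  rintro (⟨t, ht⟩ | ⟨t, h1, h2⟩)
  · rcases t with _|_|_|_|t
    · exact absurd ht (by decide)
    · exact absurd ht (by decide)
    · exact absurd ht (by decide)
    · exact absurd ht (by decide)
    · exact (by decide : (0:Fin 6) ≠ 2) ht
  · rcases t with _|_|_|_|t
    · exact absurd h1 (by decide)
    · exact absurd h1 (by decide)
    · exact absurd h1 (by decide)
    · exact absurd h1 (by decide)
    · exact (by decide : (0:Fin 6) ≠ 2) h1

/-- potential function bound -/
lemma pot_bound (φ : Fin 6 → ℕ) (hφ : ∀ a b : Fin 6, myG.Adj a b → φ a ≤ φ b + 1)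
    (σ : ℕ → Fin 6) (hstep : ∀ n, σ (n+1) = σ n ∨ myG.Adj (σ n) (σ (n+1))) :
    ∀ n, φ (σ 0) ≤ φ (σ n) + n := by
  intro n
  induction n with
  | zero => simp
  | succ n ih =>
    rcases hstep n with h | h
    · rw [h]; omega
    · have := hφ (σ n) (σ (n+1)) h
      omega

def φ2 : Fin 6 → ℕ := fun v => match v.val with |0=>2|1=>1|2=>0|3=>1|4=>2|_=>3

lemma lb_agent1 (σ : ℕ → Fin 6) (hσ : IsPathFun myG 5 2 σ) : 3 ≤ arrivalTime 2 σ := by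
  have hA := arr_spec 2 σ hσ.2.2 (arrivalTime 2 σ) le_rfl
  have := pot_bound φ2 (by decide) σ hσ.2.1 (arrivalTime 2 σ)
  rw [hσ.1, hA] at this
  simpa [φ2] using this

/-- If agent 0 sits at 0 from time 1 on, agent 1 is stuck at 5. -/
lemma agent1_stuck (τ σ : ℕ → Fin 6) (hτ : ∀ n ≥ 1, τ n = 0)
    (hσ : IsPathFun myG 5 2 σ) (hnc : ¬ Collide σ τ) : False := by
  have hv : ∀ t, σ t ≠ τ t := fun t ht => hnc (Or.inl ⟨t, ht⟩)
  have h5 : ∀ n, σ n = 5 := by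
    intro n
    induction n with
    | zero => exact hσ.1
    | succ n ih =>
      rcases hσ.2.1 n with h | h
      · rw [h, ih]
      · rw [ih] at h
        have h0 : σ (n+1) = 0 := (by decide : ∀ x : Fin 6, myG.Adj 5 x → x = 0) _ h
        exact absurd (h0.trans (hτ (n+1) (by omega)).symm) (hv (n+1))
  obtain ⟨T, hT⟩ := hσ.2.2
  have := hT T le_rfl
  rw [h5 T] at this
  exact absurd this (by decide)

/-- If agent 1 arrives at time 3, its path is forced: 5,0,3,2,2,... -/
lemma agent1_forced (σ : ℕ → Fin 6) (hσ : IsPathFun myG 5 2 σ) (ha : arrivalTime 2 σ = 3) :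
    σ 1 = 0 ∧ σ 2 = 3 ∧ ∀ n ≥ 3, σ n = 2 := by
  have htail : ∀ n ≥ 3, σ n = 2 := by
    intro n hn; exact arr_spec 2 σ hσ.2.2 n (by omega)
  have s0 : σ 0 = 5 := hσ.1
  have s3 : σ 3 = 2 := htail 3 le_rfl
  have h1 : σ 1 = 5 ∨ σ 1 = 0 := by
    rcases hσ.2.1 0 with h | h
    · rw [s0] at h; exact Or.inl h
    · rw [s0] at h
      exact Or.inr ((by decide : ∀ x : Fin 6, myG.Adj 5 x → x = 0) _ h)
  have h2pre : σ 2 = σ 1 ∨ myG.Adj (σ 1) (σ 2) := by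
    rcases hσ.2.1 1 with h | h
    · exact Or.inl h
    · exact Or.inr h
  have h3pre : σ 3 = σ 2 ∨ myG.Adj (σ 2) (σ 3) := by
    rcases hσ.2.1 2 with h | h
    · exact Or.inl h
    · exact Or.inr h
  have h2' : σ 2 = 2 ∨ σ 2 = 1 ∨ σ 2 = 3 := by
    rcases h3pre with h | h
    · rw [s3] at h; exact Or.inl h.symm
    · rw [s3] at h
      exact (by decide : ∀ x : Fin 6, myG.Adj x 2 → x = 2 ∨ x = 1 ∨ x = 3) _ h
  rcases h1 with h1 | h1
  · exfalso
    rcases h2pre with h | h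
    · rw [h1] at h
      rcases h2' with h' | h' | h' <;> rw [h'] at h <;> exact absurd h (by decide)
    · rw [h1] at h
      have := (by decide : ∀ x : Fin 6, myG.Adj 5 x → x = 0) _ h
      rcases h2' with h' | h' | h' <;> rw [h'] at this <;> exact absurd this (by decide)
  · refine ⟨h1, ?_, htail⟩
    rcases h2pre with h | h
    · rw [h1] at h
      rcases h2' with h' | h' | h' <;> rw [h'] at h <;> first | (exact absurd h (by decide)) | exact absurd h (by decide)
    · rw [h1] at h
      have hmem := (by decide : ∀ x : Fin 6, myG.Adj 0 x → x = 3 ∨ x = 4 ∨ x = 5) _ h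
      rcases h2' with h' | h' | h'
      · rw [h'] at hmem; exact absurd hmem (by decide)
      · rw [h'] at hmem; exact absurd hmem (by decide)
      · exact h'

/-- Lower bound for agent 0 against the forced agent-1 path: arrival ≥ 4. -/
lemma agent0_lb (τ σ : ℕ → Fin 6) (hτ1 : τ 1 = 0) (hτ2 : τ 2 = 3) (hτ3 : ∀ n ≥ 3, τ n = 2)
    (hσ : IsPathFun myG 3 0 σ) (hnc : ¬ Collide σ τ) : 4 ≤ arrivalTime 0 σ := by
  by_contra hlt
  push_neg at hlt
  have h3 : ∀ n ≥ 3, σ n = 0 := by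
    intro n hn
    exact arr_spec 0 σ hσ.2.2 n (by omega)
  have hv : ∀ t, σ t ≠ τ t := fun t ht => hnc (Or.inl ⟨t, ht⟩)
  have he : ∀ t, ¬ (σ t = τ (t+1) ∧ σ (t+1) = τ t) := fun t hh => hnc (Or.inr ⟨t, hh⟩)
  have s0 : σ 0 = 3 := hσ.1
  have s3 : σ 3 = 0 := h3 3 le_rfl
  have h1 : σ 1 = 3 ∨ σ 1 = 2 := by
    rcases hσ.2.1 0 with h | h
    · rw [s0] at h; exact Or.inl h
    · rw [s0] at h
      rcases (by decide : ∀ x : Fin 6, myG.Adj 3 x → x = 0 ∨ x = 2) _ h with h' | h'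
      · exfalso; exact hv 1 (by rw [h', hτ1])
      · exact Or.inr h'
  have hs2ne3 : σ 2 ≠ 3 := fun hh => hv 2 (by rw [hh, hτ2])
  have step1 := hσ.2.1 1
  have step2 := hσ.2.1 2
  rw [s3] at step2
  rcases h1 with h1 | h1
  · have hs2ne0 : σ 2 ≠ 0 := by
      intro hh
      exact he 1 ⟨by rw [h1, hτ2], by rw [hh, hτ1]⟩
    have h2 : σ 2 = 2 := by
      rcases step1 with h | h
      · rw [h1] at h; exact absurd h hs2ne3
      · rw [h1] at h
        rcases (by decide : ∀ x : Fin 6, myG.Adj 3 x → x = 0 ∨ x = 2) _ h with h' | h'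
        · exact absurd h' hs2ne0
        · exact h'
    rcases step2 with h | h
    · rw [h2] at h; exact absurd h (by decide)
    · rw [h2] at h; exact absurd h (by decide)
  · have h2 : σ 2 = 2 ∨ σ 2 = 1 := by
      rcases step1 with h | h
      · rw [h1] at h; exact Or.inl h
      · rw [h1] at h
        rcases (by decide : ∀ x : Fin 6, myG.Adj 2 x → x = 1 ∨ x = 3) _ h with h' | h'
        · exact Or.inr h'
        · exact absurd h' hs2ne3
    rcases h2 with h2 | h2 <;> rcases step2 with h | h <;> rw [h2] at h <;> exact absurd h (by decide)

abbrev Pex : MAPF where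
  V := Fin 6
  G := myG
  conn := myG_conn
  M := 2
  s := ![3, 5]
  t := ![0, 2]
  s_inj := by
    have h : ∀ a b : Fin 2, (![3, 5] : Fin 2 → Fin 6) a = ![3, 5] b → a = b := by decide
    exact fun a b => h a b
  t_inj := by
    have h : ∀ a b : Fin 2, (![0, 2] : Fin 2 → Fin 6) a = ![0, 2] b → a = b := by decide
    exact fun a b => h a b

def rp : Fin 2 → Fin 2 → Prop := fun a b => a = 1 ∧ b = 0

lemma hPO_rp : IsPO rp := by
  constructor
  · rintro i ⟨h1, h2⟩; rw [h1] at h2; exact absurd h2 (by decide)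
  · rintro i j k ⟨_, h2⟩ ⟨h3, _⟩; rw [h2] at h3; exact absurd h3 (by decide)

lemma sol_p : Pex.Solution ![p0, p1] := by
  constructor
  · intro i; fin_cases i
    · exact isPath_p0
    · exact isPath_p1
  · intro i j hij
    fin_cases i <;> fin_cases j
    · exact absurd rfl hij
    · exact ncol_p0p1
    · exact fun h => ncol_p0p1 (collide_symm h)
    · exact absurd rfl hij

lemma sol_opt : Pex.Solution ![a0, b1] := by
  constructor
  · intro i; fin_cases i
    · exact isPath_a0
    · exact isPath_b1
  · intro i j hij
    fin_cases i <;> fin_cases j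
    · exact absurd rfl hij
    · exact ncol_a0b1
    · exact fun h => ncol_a0b1 (collide_symm h)
    · exact absurd rfl hij

lemma cons_p : Pex.Consistent ![p0, p1] rp := by
  intro i; fin_cases i
  · constructor
    · refine ⟨p0, isPath_p0, ?_, rfl⟩
      intro j hj
      obtain ⟨hj1, _⟩ := hj
      rw [hj1]
      exact ncol_p0p1
    · rintro T ⟨σ, hpath, hcol, rfl⟩
      have hnc : ¬ Collide σ p1 := hcol 1 ⟨rfl, rfl⟩
      have h4 := agent0_lb p1 σ rfl rfl p1_tail hpath hnc
      show arrivalTime 0 p0 ≤ arrivalTime 0 σ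
      rw [arr_p0]; exact h4
  · constructor
    · refine ⟨p1, isPath_p1, ?_, rfl⟩
      intro j hj
      exact absurd hj.2 (by decide)
    · rintro T ⟨σ, hpath, hcol, rfl⟩
      show arrivalTime 2 p1 ≤ arrivalTime 2 σ
      rw [arr_p1]; exact lb_agent1 σ hpath

lemma flow_eq (π : Fin 2 → ℕ → Fin 6) :
    Pex.flowtime π = Pex.arr 0 (π 0) + Pex.arr 1 (π 1) := Fin.sum_univ_two _

/-- Prioritized planning is suboptimal for the flowtime objective on P-solvable MAPF
instances: there is a P-solvable instance with a solution whose flowtime is strictly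
smaller than the flowtime of every solution consistent with any priority ordering. -/
theorem stmt8 :
    ∃ P : MAPF, P.PSolvable ∧ ∃ πopt, P.Solution πopt ∧
      ∀ (π : Fin P.M → ℕ → P.V) (r : Fin P.M → Fin P.M → Prop),
        IsPO r → P.Solution π → P.Consistent π r →
          P.flowtime πopt < P.flowtime π := by
  refine ⟨Pex, ⟨![p0, p1], rp, hPO_rp, sol_p, cons_p⟩, ![a0, b1], sol_opt, ?_⟩
  intro π r hr hsol hcons
  have hflow : Pex.flowtime ![a0, b1] = 6 := by
    rw [flow_eq]
    show arrivalTime 0 a0 + arrivalTime 2 b1 = 6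
    rw [arr_a0, arr_b1]
  rw [hflow, flow_eq]
  by_cases h10 : r 1 0
  · have h01 : ¬ r 0 1 := fun h => hr.1 0 (hr.2 0 1 0 h h10)
    have hL := hcons 1
    have hub : Pex.arr 1 (π 1) ≤ 3 := by
      refine hL.2 ⟨p1, isPath_p1, ?_, ?_⟩
      · intro j hj
        fin_cases j
        · exact absurd hj h01
        · exact absurd hj (hr.1 1)
      · show arrivalTime 2 p1 = 3
        exact arr_p1
    have hlb : 3 ≤ arrivalTime 2 (π 1) := lb_agent1 (π 1) (hsol.1 1)
    have ha1 : arrivalTime 2 (π 1) = 3 := le_antisymm hub hlb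
    obtain ⟨f1, f2, f3⟩ := agent1_forced (π 1) (hsol.1 1) ha1
    have h0 : 4 ≤ arrivalTime 0 (π 0) :=
      agent0_lb (π 1) (π 0) f1 f2 f3 (hsol.1 0) (hsol.2 0 1 (by decide))
    show 6 < arrivalTime 0 (π 0) + arrivalTime 2 (π 1)
    omega
  · exfalso
    have hL := hcons 0
    have hub : Pex.arr 0 (π 0) ≤ 1 := by
      refine hL.2 ⟨d0, isPath_d0, ?_, ?_⟩
      · intro j hj
        fin_cases j
        · exact absurd hj (hr.1 0)
        · exact absurd hj h10
      · show arrivalTime 0 d0 = 1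
        exact arr_d0
    have htail := arr_spec 0 (π 0) (hsol.1 0).2.2
    have hτ : ∀ n ≥ 1, π 0 n = 0 := fun n hn => htail n (le_trans hub hn)
    exact agent1_stuck (π 0) (π 1) hτ (hsol.1 1) (hsol.2 1 0 (by decide))
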